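/- Let F be a field and let M(x)=[A(x)|B(x)] be a bipartite pattern matrix in n unknowns with generic ranks r_A, r_B, r_M. Let 𝒜 be a largest left matchbox and ℬ a largest right matchbox such that v(𝒜,ℬ) is minimal among all pairs consisting of a largest left matchbox and a largest right matchbox. Then rank A(ε_{𝒜∪ℬ}) = |𝒜| = r_A, rank B(ε_{𝒜∪ℬ}) = |ℬ| = r_B, and rank M(ε_{𝒜∪ℬ}) = |𝒜⋓ℬ| = r_M, where the ranks are over F. -/

import Mathlib

open Matrix

/-- A position in the bipartite pattern: either an entry of the `m × p` A-block
or an entry of the `m × q` B-block. -/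
abbrev BipPos (m p q : ℕ) := (Fin m × Fin p) ⊕ (Fin m × Fin q)

/-- The row index of a position. -/
def posRow {m p q : ℕ} : BipPos m p q → Fin m := Sum.elim Prod.fst Prod.fst

/-- The column index of a position (as a column of the block matrix `[A|B]`). -/
def posCol {m p q : ℕ} : BipPos m p q → Fin p ⊕ Fin q := Sum.map Prod.snd Prod.snd

/-- The A-block of the pattern matrix, at the substitution `a`. -/
def patA {m p q n : ℕ} (pos : Fin n → BipPos m p q) {R : Type*} [CommRing R]
    (a : Fin n → R) : Matrix (Fin m) (Fin p) R :=
  Matrix.of fun i j => ∑ l : Fin n, if pos l = Sum.inl (i, j) then a l else 0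

/-- The B-block of the pattern matrix, at the substitution `a`. -/
def patB {m p q n : ℕ} (pos : Fin n → BipPos m p q) {R : Type*} [CommRing R]
    (a : Fin n → R) : Matrix (Fin m) (Fin q) R :=
  Matrix.of fun i k => ∑ l : Fin n, if pos l = Sum.inr (i, k) then a l else 0

/-- The full bipartite pattern matrix `M = [A | B]` at the substitution `a`. -/
def patM {m p q n : ℕ} (pos : Fin n → BipPos m p q) {R : Type*} [CommRing R]
    (a : Fin n → R) : Matrix (Fin m) (Fin p ⊕ Fin q) R :=
  Matrix.fromCols (patA pos a) (patB pos a)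

/-- The generic point: the variables `x₁, …, xₙ` viewed in the field
`K = F(x₁,…,xₙ)` of rational functions. -/
noncomputable def genericX (F : Type*) [Field F] (n : ℕ) :
    Fin n → FractionRing (MvPolynomial (Fin n) F) :=
  fun l => algebraMap (MvPolynomial (Fin n) F) (FractionRing (MvPolynomial (Fin n) F))
    (MvPolynomial.X l)

/-- The generic rank `r_A` of the A-block. -/
noncomputable def genRankA (F : Type*) [Field F] {m p q n : ℕ}
    (pos : Fin n → BipPos m p q) : ℕ :=
  (patA pos (genericX F n)).rank

/-- The generic rank `r_B` of the B-block. -/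
noncomputable def genRankB (F : Type*) [Field F] {m p q n : ℕ}
    (pos : Fin n → BipPos m p q) : ℕ :=
  (patB pos (genericX F n)).rank

/-- The generic rank `r_M` of `M = [A | B]`. -/
noncomputable def genRankM (F : Type*) [Field F] {m p q n : ℕ}
    (pos : Fin n → BipPos m p q) : ℕ :=
  (patM pos (genericX F n)).rank

/-- Equivalence of bipartite matrices: `[A'|B'] = [S·A·R₁ | S·B·R₂]` with
`S, R₁, R₂` invertible. -/
def BipEquiv {F : Type*} [Field F] {m p q : ℕ}
    (A : Matrix (Fin m) (Fin p) F) (B : Matrix (Fin m) (Fin q) F)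
    (A' : Matrix (Fin m) (Fin p) F) (B' : Matrix (Fin m) (Fin q) F) : Prop :=
  ∃ (S : Matrix (Fin m) (Fin m) F) (R₁ : Matrix (Fin p) (Fin p) F)
    (R₂ : Matrix (Fin q) (Fin q) F),
    IsUnit S ∧ IsUnit R₁ ∧ IsUnit R₂ ∧ A' = S * A * R₁ ∧ B' = S * B * R₂

/-- The A-block of the canonical bipartite matrix `C(r,s,t)`:
`I_r` in rows `1..r`, columns `1..r`, and `I_s` in rows `r+1..r+s`,
columns `r+1..r+s`. -/
def canonA (F : Type*) [Field F] (m p r s : ℕ) : Matrix (Fin m) (Fin p) F :=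
  Matrix.of fun i j => if (i : ℕ) = (j : ℕ) ∧ (i : ℕ) < r + s then 1 else 0

/-- The B-block of the canonical bipartite matrix `C(r,s,t)`:
`I_r` in rows `1..r`, columns `t+1..t+r`, and `I_t` in rows `r+s+1..r+s+t`,
columns `1..t`. -/
def canonB (F : Type*) [Field F] (m q r s t : ℕ) : Matrix (Fin m) (Fin q) F :=
  Matrix.of fun i k =>
    if ((i : ℕ) < r ∧ (k : ℕ) = t + (i : ℕ)) ∨
       (r + s ≤ (i : ℕ) ∧ (i : ℕ) < r + s + t ∧ (k : ℕ) + (r + s) = (i : ℕ)) then 1 else 0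

/-- A matchbox: a set of pattern positions, no two sharing a row index and no two
within the same block sharing a column index. -/
def IsMatchbox {m p q n : ℕ} (pos : Fin n → BipPos m p q) (S : Finset (Fin n)) : Prop :=
  ∀ l ∈ S, ∀ l' ∈ S, l ≠ l' →
    posRow (pos l) ≠ posRow (pos l') ∧ posCol (pos l) ≠ posCol (pos l')

/-- A left matchbox: a matchbox all of whose positions lie in the A-block. -/
def IsLeftMatchbox {m p q n : ℕ} (pos : Fin n → BipPos m p q) (S : Finset (Fin n)) : Prop :=
  IsMatchbox pos S ∧ ∀ l ∈ S, (pos l).isLeft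

/-- A right matchbox: a matchbox all of whose positions lie in the B-block. -/
def IsRightMatchbox {m p q n : ℕ} (pos : Fin n → BipPos m p q) (S : Finset (Fin n)) : Prop :=
  IsMatchbox pos S ∧ ∀ l ∈ S, (pos l).isRight

/-- A largest left matchbox. -/
def IsLargestLeft {m p q n : ℕ} (pos : Fin n → BipPos m p q) (S : Finset (Fin n)) : Prop :=
  IsLeftMatchbox pos S ∧ ∀ T : Finset (Fin n), IsLeftMatchbox pos T → T.card ≤ S.card

/-- A largest right matchbox. -/
def IsLargestRight {m p q n : ℕ} (pos : Fin n → BipPos m p q) (S : Finset (Fin n)) : Prop :=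
  IsRightMatchbox pos S ∧ ∀ T : Finset (Fin n), IsRightMatchbox pos T → T.card ≤ S.card

/-- The set of row indices met by the positions of `S`. -/
def rowSet {m p q n : ℕ} (pos : Fin n → BipPos m p q) (S : Finset (Fin n)) : Finset (Fin m) :=
  S.image fun l => posRow (pos l)

/-- `v(𝒜,ℬ)`: the number of row indices met by both `𝒜` and `ℬ`. -/
def vCommon {m p q n : ℕ} (pos : Fin n → BipPos m p q) (𝒜 ℬ : Finset (Fin n)) : ℕ :=
  (rowSet pos 𝒜 ∩ rowSet pos ℬ).card

/-- `𝒜 ⋓ ℬ`: `𝒜` together with those positions of `ℬ` whose row is not a row of `𝒜`. -/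
def mcup {m p q n : ℕ} (pos : Fin n → BipPos m p q) (𝒜 ℬ : Finset (Fin n)) : Finset (Fin n) :=
  𝒜 ∪ ℬ.filter fun l => posRow (pos l) ∉ rowSet pos 𝒜

/-- An optimal pair: a largest left matchbox and a largest right matchbox whose number of
common row indices is minimal among all such pairs. -/
def IsOptimalPair {m p q n : ℕ} (pos : Fin n → BipPos m p q) (𝒜 ℬ : Finset (Fin n)) : Prop :=
  IsLargestLeft pos 𝒜 ∧ IsLargestRight pos ℬ ∧
  ∀ 𝒜' ℬ' : Finset (Fin n), IsLargestLeft pos 𝒜' → IsLargestRight pos ℬ' →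
    vCommon pos 𝒜 ℬ ≤ vCommon pos 𝒜' ℬ'

/-- The characteristic vector `ε_S ∈ {0,1}ⁿ` of a set of labels. -/
def charVec (F : Type*) [Zero F] [One F] {n : ℕ} (S : Finset (Fin n)) : Fin n → F :=
  fun l => if l ∈ S then 1 else 0

/-- The minor `μ_S(x)` of `M(x)` on the rows and the columns met by the matchbox `S`
(as a polynomial; well defined up to sign, rows and columns being indexed by `S`). -/
noncomputable def minorX (F : Type*) [Field F] {m p q n : ℕ} (pos : Fin n → BipPos m p q)
    (S : Finset (Fin n)) : MvPolynomial (Fin n) F :=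
  (Matrix.of fun (l : S) (l' : S) =>
    patM pos (fun i => (MvPolynomial.X i : MvPolynomial (Fin n) F))
      (posRow (pos l)) (posCol (pos l'))).det

set_option linter.unusedSectionVars false
set_option linter.unusedTactic false
set_option maxHeartbeats 1600000
open Matrix
open Finset

section Matching

variable {L V W : Type*} [DecidableEq L] [DecidableEq V] [DecidableEq W]
variable (P : Finset L) (r : L → V) (c : L → W)

/-- abstract matching -/
def IsMB (S : Finset L) : Prop :=
  S ⊆ P ∧ Set.InjOn r ↑S ∧ Set.InjOn c ↑S

def nbr (T : Finset V) : Finset W := (P.filter fun l => r l ∈ T).image c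

variable {P r c}

lemma nbr_mono {T T' : Finset V} (h : T ⊆ T') : nbr P r c T ⊆ nbr P r c T' := by
  apply image_subset_image
  intro l hl
  simp only [mem_filter] at hl ⊢
  exact ⟨hl.1, h hl.2⟩

lemma nbr_union (T T' : Finset V) :
    nbr P r c (T ∪ T') = nbr P r c T ∪ nbr P r c T' := by
  unfold nbr
  rw [← image_union]
  congr 1
  ext l
  simp only [mem_filter, mem_union]
  tauto

lemma nbr_inter_subset (T T' : Finset V) :
    nbr P r c (T ∩ T') ⊆ nbr P r c T ∩ nbr P r c T' :=
  subset_inter (nbr_mono inter_subset_left) (nbr_mono inter_subset_right)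

lemma card_rws {S : Finset L} (hS : IsMB P r c S) : (S.image r).card = S.card :=
  card_image_of_injOn hS.2.1

lemma hall_easy {S : Finset L} (hS : IsMB P r c S) {T : Finset V} (hT : T ⊆ S.image r) :
    T.card ≤ (nbr P r c T).card := by
  classical
  set S' := S.filter (fun l => r l ∈ T) with hS'
  have hTim : T = S'.image r := by
    apply Subset.antisymm
    · intro x hx
      obtain ⟨l, hl, rfl⟩ := mem_image.mp (hT hx)
      exact mem_image.mpr ⟨l, mem_filter.mpr ⟨hl, hx⟩, rfl⟩
    · intro x hx
      obtain ⟨l, hl, rfl⟩ := mem_image.mp hx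
      exact (mem_filter.mp hl).2
  have h1 : T.card = S'.card := by
    rw [hTim]; exact card_image_of_injOn (hS.2.1.mono (by intro x hx; simp only [hS', coe_filter, Set.mem_setOf_eq] at hx; exact hx.1))
  have h2 : (S'.image c).card = S'.card :=
    card_image_of_injOn (hS.2.2.mono (by intro x hx; simp only [hS', coe_filter, Set.mem_setOf_eq] at hx; exact hx.1))
  have h3 : S'.image c ⊆ nbr P r c T := by
    apply image_subset_image
    intro l hl
    simp only [hS', mem_filter] at hl ⊢
    exact ⟨hS.1 hl.1, hl.2⟩
  rw [h1, ← h2]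
  exact card_le_card h3

lemma matchable_of_hall [Fintype V] {R : Finset V}
    (hH : ∀ T ⊆ R, T.card ≤ (nbr P r c T).card) :
    ∃ S : Finset L, IsMB P r c S ∧ S.image r = R := by
  classical
  have key : ∀ s : Finset {x // x ∈ R}, s.card ≤ (s.biUnion fun i => nbr P r c {i.1}).card := by
    intro s
    have h1 : s.biUnion (fun i => nbr P r c {i.1}) = nbr P r c (s.image Subtype.val) := by
      ext w
      simp only [mem_biUnion, nbr, mem_image, mem_filter, mem_singleton]
      constructor
      · rintro ⟨i, hi, l, ⟨hlP, hrl⟩, rfl⟩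
        exact ⟨l, ⟨hlP, ⟨i, hi, hrl.symm⟩⟩, rfl⟩
      · rintro ⟨l, ⟨hlP, ⟨i, hi, hv⟩⟩, rfl⟩
        exact ⟨i, hi, l, ⟨hlP, hv ▸ rfl⟩, rfl⟩
    rw [h1]
    have h2 : s.card = (s.image Subtype.val).card :=
      (card_image_of_injective _ Subtype.val_injective).symm
    rw [h2]
    apply hH
    intro x hx
    obtain ⟨i, _, rfl⟩ := mem_image.mp hx
    exact i.2
  obtain ⟨f, hfinj, hf⟩ := (Finset.all_card_le_biUnion_card_iff_existsInjective'
    (fun i : {x // x ∈ R} => nbr P r c {i.1})).mp key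
  have hch : ∀ i : {x // x ∈ R}, ∃ l, l ∈ P ∧ r l = i.1 ∧ c l = f i := by
    intro i
    have := hf i
    simp only [nbr, mem_image, mem_filter, mem_singleton] at this
    obtain ⟨l, ⟨hlP, hrl⟩, hcl⟩ := this
    exact ⟨l, hlP, hrl, hcl⟩
  choose ℓ hℓP hℓr hℓc using hch
  refine ⟨R.attach.image ℓ, ⟨?_, ?_, ?_⟩, ?_⟩
  · intro x hx
    obtain ⟨i, _, rfl⟩ := mem_image.mp hx
    exact hℓP i
  · intro x hx y hy hxy
    simp only [coe_image, Set.mem_image, mem_coe] at hx hy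
    obtain ⟨i, _, rfl⟩ := hx
    obtain ⟨j, _, rfl⟩ := hy
    rw [hℓr i, hℓr j] at hxy
    exact congrArg ℓ (Subtype.ext hxy)
  · intro x hx y hy hxy
    simp only [coe_image, Set.mem_image, mem_coe] at hx hy
    obtain ⟨i, _, rfl⟩ := hx
    obtain ⟨j, _, rfl⟩ := hy
    rw [hℓc i, hℓc j] at hxy
    exact congrArg ℓ (hfinj hxy)
  · rw [image_image]
    have : (r ∘ ℓ) = fun i : {x // x ∈ R} => i.1 := funext hℓr
    rw [this, attach_image_val]

theorem ext_one [Fintype V] {α γ : Finset L} (hα : IsMB P r c α) (hγ : IsMB P r c γ)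
    (hlt : α.card < γ.card) :
    ∃ α', IsMB P r c α' ∧ α'.card = α.card + 1 ∧ α.image r ⊆ α'.image r := by
  classical
  by_contra hcon
  push_neg at hcon
  set R := α.image r with hR
  have hcardR : R.card = α.card := card_rws hα
  -- every i ∉ R : insert i R is not matchable
  have hnomatch : ∀ i ∉ R, ¬ ∃ S, IsMB P r c S ∧ S.image r = insert i R := by
    rintro i hi ⟨S, hS, hSr⟩
    have hcard : S.card = α.card + 1 := by
      rw [← card_rws hS, hSr, card_insert_of_notMem hi, hcardR]
    exact absurd (hSr ▸ subset_insert i R) (hcon S hS hcard)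
  -- Hall fails for insert i R
  have hfail : ∀ i, i ∉ R → ∃ T, T ⊆ insert i R ∧ (nbr P r c T).card < T.card := by
    intro i hi
    by_contra h
    push_neg at h
    exact hnomatch i hi (matchable_of_hall (fun T hT => h T hT))
  -- choice of bad sets
  have hfail' : ∀ i : V, ∃ T, i ∉ R → (T ⊆ insert i R ∧ (nbr P r c T).card < T.card) := by
    intro i
    by_cases hi : i ∈ R
    · exact ⟨∅, fun h => absurd hi h⟩
    · obtain ⟨T, hT⟩ := hfail i hi
      exact ⟨T, fun _ => hT⟩
  choose To hTo using hfail'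
  -- i ∈ To i
  have hmemTo : ∀ i, i ∉ R → i ∈ To i := by
    intro i hi
    by_contra hmem
    have hsub : To i ⊆ R := by
      intro x hx
      rcases mem_insert.mp ((hTo i hi).1 hx) with h | h
      · exact absurd (h ▸ hx) hmem
      · exact h
    exact absurd (hall_easy hα hsub) (not_le.mpr (hTo i hi).2)
  -- card identity for To i
  have hcardTo : ∀ i, i ∉ R → (To i ∩ R).card + 1 = (To i).card := by
    intro i hi
    have : To i = insert i (To i ∩ R) := by
      apply Subset.antisymm
      · intro x hx
        rcases mem_insert.mp ((hTo i hi).1 hx) with h | h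
        · exact mem_insert.mpr (Or.inl h)
        · exact mem_insert.mpr (Or.inr (mem_inter.mpr ⟨hx, h⟩))
      · intro x hx
        rcases mem_insert.mp hx with h | h
        · exact h ▸ hmemTo i hi
        · exact (mem_inter.mp h).1
    rw [this, card_insert_of_notMem (fun h => hi (mem_inter.mp h).2),
      insert_inter_of_notMem hi, inter_assoc, inter_self]
  -- the integer valued function
  set f : Finset V → ℤ := fun T => ((nbr P r c T).card : ℤ) - ((T ∩ R).card : ℤ) with hf
  have h0 : ∀ T, T ⊆ R → 0 ≤ f T := by
    intro T hT
    have := hall_easy hα (hR ▸ hT)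
    have hTR : T ∩ R = T := inter_eq_left.mpr hT
    simp only [hf, hTR, sub_nonneg]
    exact_mod_cast this
  have hsubmod : ∀ T T', f (T ∪ T') + f (T ∩ T') ≤ f T + f T' := by
    intro T T'
    have h1 : (nbr P r c (T ∪ T')).card + (nbr P r c (T ∩ T')).card
        ≤ (nbr P r c T).card + (nbr P r c T').card := by
      rw [nbr_union]
      calc (nbr P r c T ∪ nbr P r c T').card + (nbr P r c (T ∩ T')).card
          ≤ (nbr P r c T ∪ nbr P r c T').card + (nbr P r c T ∩ nbr P r c T').card :=
            Nat.add_le_add_left (card_le_card (nbr_inter_subset T T')) _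
        _ = _ := card_union_add_card_inter _ _
    have h2 : ((T ∪ T') ∩ R).card + ((T ∩ T') ∩ R).card = (T ∩ R).card + (T' ∩ R).card := by
      rw [union_inter_distrib_right, inter_inter_distrib_right]
      exact card_union_add_card_inter _ _
    simp only [hf]
    push_cast
    omega
  have hfTo : ∀ i, i ∉ R → f (To i) ≤ 0 := by
    intro i hi
    have h1 := (hTo i hi).2
    have h2 := hcardTo i hi
    simp only [hf]
    omega
  -- induction over J
  have key : ∀ J : Finset V, J ⊆ Rᶜ →
      J ⊆ J.biUnion To ∧ J.biUnion To ⊆ R ∪ J ∧ f (J.biUnion To) ≤ 0 := by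
    intro J
    induction J using Finset.induction_on with
    | empty =>
      intro _
      refine ⟨by simp, by simp, ?_⟩
      simp only [biUnion_empty, hf, nbr]
      simp
    | insert i J hiJ ih =>
      intro hJ
      have hisub : J ⊆ Rᶜ := (subset_insert i J).trans hJ
      obtain ⟨ih1, ih2, ih3⟩ := ih hisub
      have hiR : i ∉ R := by
        have := hJ (mem_insert_self i J)
        simpa using this
      rw [biUnion_insert]
      have hint : To i ∩ J.biUnion To ⊆ R := by
        intro x hx
        obtain ⟨hx1, hx2⟩ := mem_inter.mp hx
        rcases mem_insert.mp ((hTo i hiR).1 hx1) with h | h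
        · subst h
          rcases mem_union.mp (ih2 hx2) with h | h
          · exact h
          · exact absurd h hiJ
        · exact h
      refine ⟨?_, ?_, ?_⟩
      · intro x hx
        rcases mem_insert.mp hx with h | h
        · exact mem_union.mpr (Or.inl (h ▸ hmemTo i hiR))
        · exact mem_union.mpr (Or.inr (ih1 h))
      · intro x hx
        rcases mem_union.mp hx with h | h
        · rcases mem_insert.mp ((hTo i hiR).1 h) with h' | h'
          · exact mem_union.mpr (Or.inr (mem_insert.mpr (Or.inl h')))
          · exact mem_union.mpr (Or.inl h')
        · rcases mem_union.mp (ih2 h) with h' | h'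
          · exact mem_union.mpr (Or.inl h')
          · exact mem_union.mpr (Or.inr (mem_insert.mpr (Or.inr h')))
      · have := hsubmod (To i) (J.biUnion To)
        have h1 := hfTo i hiR
        have h2 := h0 _ hint
        omega
  obtain ⟨k1, k2, k3⟩ := key Rᶜ (Subset.refl _)
  set Wt := Rᶜ.biUnion To with hWt
  have hWcompl : ∀ x, x ∉ Wt → x ∈ R := by
    intro x hx
    by_contra hxR
    exact hx (k1 (mem_compl.mpr hxR))
  have hnbrW : (nbr P r c Wt).card ≤ (Wt ∩ R).card := by
    have := k3
    simp only [hf] at this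
    omega
  -- use γ
  set T0 := (γ.image r) ∩ Wt with hT0
  have h1 : T0.card ≤ (nbr P r c T0).card := hall_easy hγ inter_subset_left
  have h2 : (nbr P r c T0).card ≤ (nbr P r c Wt).card := card_le_card (nbr_mono inter_subset_right)
  have h3 : γ.image r ⊆ T0 ∪ (R \ Wt) := by
    intro x hx
    by_cases hxW : x ∈ Wt
    · exact mem_union.mpr (Or.inl (mem_inter.mpr ⟨hx, hxW⟩))
    · exact mem_union.mpr (Or.inr (mem_sdiff.mpr ⟨hWcompl x hxW, hxW⟩))
  have h4 : (γ.image r).card ≤ T0.card + (R \ Wt).card :=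
    le_trans (card_le_card h3) (card_union_le _ _)
  have h5 : (Wt ∩ R).card + (R \ Wt).card = R.card := by
    rw [inter_comm]
    exact card_inter_add_card_sdiff R Wt
  have h6 : (γ.image r).card = γ.card := card_rws hγ
  omega

theorem ext_iter [Fintype V] {α γ : Finset L} (hα : IsMB P r c α) (hγ : IsMB P r c γ) :
    ∀ k, α.card + k ≤ γ.card →
      ∃ α', IsMB P r c α' ∧ α'.card = α.card + k ∧ α.image r ⊆ α'.image r := by
  intro k
  induction k with
  | zero => exact fun _ => ⟨α, hα, rfl, Subset.refl _⟩
  | succ k ih =>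
    intro hk
    obtain ⟨α₁, hα₁, hcard₁, hsub₁⟩ := ih (by omega)
    obtain ⟨α', hα', hcard', hsub'⟩ := ext_one hα₁ hγ (by omega)
    exact ⟨α', hα', by omega, hsub₁.trans hsub'⟩

end Matching

section RankLemmas
variable {K : Type*} [Field K]

/-- submatrix rank is at most rank (arbitrary index functions). -/
theorem rank_submatrix_le' {m' p' ι κ : Type*} [Fintype m'] [Fintype p'] [Fintype ι] [Fintype κ]
    [DecidableEq m'] [DecidableEq p']
    (A : Matrix m' p' K) (f : ι → m') (g : κ → p') :
    (A.submatrix f g).rank ≤ A.rank := by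
  classical
  set E : Matrix ι m' K := Matrix.of fun i i' => if f i = i' then (1:K) else 0 with hE
  set G : Matrix p' κ K := Matrix.of fun j' j => if g j = j' then (1:K) else 0 with hG
  have key : A.submatrix f g = E * A * G := by
    ext i j
    simp only [submatrix_apply, mul_apply, hE, hG, Matrix.of_apply, ite_mul, one_mul, zero_mul,
      mul_ite, mul_one, mul_zero]
    simp [Finset.sum_ite_eq]
  rw [key]
  exact le_trans (rank_mul_le_left _ _) (rank_mul_le_right _ _)

theorem card_le_rank_of_unit_submatrix {m' p' ι : Type*} [Fintype m'] [Fintype p'] [Fintype ι]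
    [DecidableEq ι] [DecidableEq m'] [DecidableEq p']
    (A : Matrix m' p' K) (f : ι → m') (g : ι → p')
    (h : IsUnit (A.submatrix f g)) : Fintype.card ι ≤ A.rank := by
  have h1 : (A.submatrix f g).rank = Fintype.card ι := rank_of_isUnit _ h
  exact h1 ▸ rank_submatrix_le' A f g

/-- extraction of linearly independent columns -/
theorem exists_indep_cols {m' p' : Type*} [Fintype m'] [Fintype p'] [DecidableEq m']
    (A : Matrix m' p' K) :
    ∃ g : Fin A.rank → p', Function.Injective g ∧
      LinearIndependent K (fun k => Aᵀ (g k)) := by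
  classical
  obtain ⟨b, hbsub, hbspan, hbind⟩ := exists_linearIndependent K (Set.range Aᵀ)
  have hbfin : b.Finite := (Set.finite_range Aᵀ).subset hbsub
  haveI : Fintype b := hbfin.fintype
  have hbcard : Fintype.card b = A.rank := by
    rw [rank_eq_finrank_span_cols, show Set.range A.col = Set.range Aᵀ from rfl, ← hbspan, finrank_span_set_eq_card hbind,
      Set.toFinset_card]
  let e : Fin A.rank ≃ b := (Fintype.equivFinOfCardEq hbcard).symm
  have hchoice : ∀ x : b, ∃ j : p', Aᵀ j = (x : m' → K) := fun x => hbsub x.2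
  choose g₀ hg₀ using hchoice
  refine ⟨fun k => g₀ (e k), ?_, ?_⟩
  · intro k k' hk
    have hk' : g₀ (e k) = g₀ (e k') := hk
    have : (e k : m' → K) = (e k' : m' → K) := by rw [← hg₀ (e k), ← hg₀ (e k'), hk']
    exact e.injective (Subtype.ext this)
  · have : (fun k => Aᵀ (g₀ (e k))) = (fun k => ((e k : b) : m' → K)) := by
      funext k; exact hg₀ (e k)
    rw [this]
    exact hbind.comp e e.injective

theorem exists_unit_submatrix {m' p' : Type*} [Fintype m'] [Fintype p']
    [DecidableEq m'] [DecidableEq p'] (A : Matrix m' p' K) :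
    ∃ (f : Fin A.rank → m') (g : Fin A.rank → p'),
      Function.Injective f ∧ Function.Injective g ∧ IsUnit (A.submatrix f g) := by
  classical
  obtain ⟨g, hginj, hgind⟩ := exists_indep_cols A
  set B : Matrix (Fin A.rank) m' K := Aᵀ.submatrix g id with hB
  have hBrows : LinearIndependent K (fun k => B k) := hgind
  have hBrank : B.rank = A.rank := by
    rw [LinearIndependent.rank_matrix (M := B) hBrows, Fintype.card_fin]
  obtain ⟨g', hg'inj, hg'ind⟩ := exists_indep_cols B
  set g'' : Fin A.rank → m' := g' ∘ (Fin.cast hBrank.symm) with hg''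
  have hg''inj : Function.Injective g'' := hg'inj.comp (Fin.cast_injective _)
  refine ⟨g'', g, hg''inj, hginj, ?_⟩
  have hrows : LinearIndependent K (fun k : Fin A.rank => (A.submatrix g'' g) k) := by
    have : (fun k : Fin A.rank => (A.submatrix g'' g) k)
        = (fun k => Bᵀ (g' (Fin.cast hBrank.symm k))) := by
      funext k; funext j
      rfl
    rw [this]
    exact hg'ind.comp (Fin.cast hBrank.symm) (Fin.cast_injective _)
  exact Matrix.linearIndependent_rows_iff_isUnit.mp hrows

theorem rank_le_card_rows_support {m' p' : Type*} [Fintype m'] [Fintype p'] [DecidableEq m']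
    (A : Matrix m' p' K) (s : Finset m') (h : ∀ i j, A i j ≠ 0 → i ∈ s) :
    A.rank ≤ s.card := by
  classical
  set e : m' → (m' → K) := fun i => Pi.single i 1 with he
  have hcol : ∀ j, Aᵀ j ∈ Submodule.span K (e '' ↑s) := by
    intro j
    have heq : Aᵀ j = ∑ i ∈ s, A i j • e i := by
      funext i'
      simp only [Finset.sum_apply, Pi.smul_apply, he, Pi.single_apply, smul_eq_mul,
        mul_ite, mul_one, mul_zero]
      rw [Finset.sum_ite_eq s i' (fun x => A x j)]
      by_cases hi : i' ∈ s
      · simp [hi]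
      · simp only [hi, if_false]
        by_contra hne
        exact hi (h i' j hne)
    rw [heq]
    exact Submodule.sum_mem _ (fun i hi => Submodule.smul_mem _ _
      (Submodule.subset_span ⟨i, hi, rfl⟩))
  have hspan : Submodule.span K (Set.range Aᵀ) ≤ Submodule.span K (e '' ↑s) := by
    rw [Submodule.span_le]
    rintro x ⟨j, rfl⟩
    exact hcol j
  have h1 : A.rank ≤ Module.finrank K (Submodule.span K (e '' ↑s)) := by
    rw [rank_eq_finrank_span_cols]
    exact Submodule.finrank_mono hspan
  have h2 : Module.finrank K (Submodule.span K (e '' ↑s)) ≤ (s.image e).card := by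
    have : (e '' ↑s) = ↑(s.image e) := by rw [Finset.coe_image]
    rw [this]
    exact finrank_span_finset_le_card _
  exact le_trans h1 (le_trans h2 (Finset.card_image_le))

end RankLemmas

section Pattern
variable {m p q n : ℕ}

/-- make a position from row and column -/
def bipMk (i : Fin m) : Fin p ⊕ Fin q → BipPos m p q
  | .inl j => .inl (i, j)
  | .inr k => .inr (i, k)

@[simp] lemma posRow_bipMk (i : Fin m) (c : Fin p ⊕ Fin q) : posRow (bipMk i c) = i := by
  cases c <;> rfl

@[simp] lemma posCol_bipMk (i : Fin m) (c : Fin p ⊕ Fin q) : posCol (bipMk i c) = c := by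
  cases c <;> rfl

lemma bipMk_row_col (x : BipPos m p q) : bipMk (posRow x) (posCol x) = x := by
  cases x <;> rfl

lemma bipMk_isLeft (i : Fin m) (j : Fin p) : (bipMk i (Sum.inl j) : BipPos m p q).isLeft := rfl

lemma bipMk_isRight (i : Fin m) (k : Fin q) : (bipMk i (Sum.inr k) : BipPos m p q).isRight := rfl

variable (pos : Fin n → BipPos m p q)

lemma patM_apply {R : Type*} [CommRing R] (a : Fin n → R) (i : Fin m) (c : Fin p ⊕ Fin q) :
    patM pos a i c = ∑ l : Fin n, if pos l = bipMk i c then a l else 0 := by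
  cases c <;> rfl

lemma patA_eq_patM {R : Type*} [CommRing R] (a : Fin n → R) (i : Fin m) (j : Fin p) :
    patA pos a i j = patM pos a i (Sum.inl j) := rfl

lemma patB_eq_patM {R : Type*} [CommRing R] (a : Fin n → R) (i : Fin m) (k : Fin q) :
    patB pos a i k = patM pos a i (Sum.inr k) := rfl

lemma patM_map {R R' : Type*} [CommRing R] [CommRing R'] (φ : R →+* R') (a : Fin n → R) :
    (patM pos a).map φ = patM pos (fun l => φ (a l)) := by
  ext i c
  rw [Matrix.map_apply, patM_apply, patM_apply, map_sum]
  congr 1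
  funext l
  rw [apply_ite φ, map_zero]

lemma patM_entry_eq (hpos : Function.Injective pos) {R : Type*} [CommRing R] (a : Fin n → R)
    (l₀ : Fin n) {i : Fin m} {c : Fin p ⊕ Fin q} (h : pos l₀ = bipMk i c) :
    patM pos a i c = a l₀ := by
  rw [patM_apply]
  rw [Finset.sum_eq_single l₀]
  · rw [if_pos h]
  · intro l _ hne
    rw [if_neg]
    intro hl
    exact hne (hpos (hl.trans h.symm))
  · intro h'
    exact absurd (Finset.mem_univ l₀) h'

lemma patM_entry_zero {R : Type*} [CommRing R] (a : Fin n → R)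
    {i : Fin m} {c : Fin p ⊕ Fin q} (h : ∀ l, pos l = bipMk i c → a l = 0) :
    patM pos a i c = 0 := by
  rw [patM_apply]
  apply Finset.sum_eq_zero
  intro l _
  by_cases hl : pos l = bipMk i c
  · rw [if_pos hl]; exact h l hl
  · rw [if_neg hl]

/-- the key identity-submatrix lemma at a characteristic vector -/
lemma patM_submatrix_eq_one (hpos : Function.Injective pos) (F : Type*) [Field F]
    (U S : Finset (Fin n)) (hSU : S ⊆ U)
    (huniq : ∀ l ∈ S, ∀ l' ∈ S, ∀ l'' ∈ U,
      pos l'' = bipMk (posRow (pos l)) (posCol (pos l')) → l = l') :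
    (patM pos (charVec F U)).submatrix (fun l : {x // x ∈ S} => posRow (pos l.1))
      (fun l : {x // x ∈ S} => posCol (pos l.1)) = 1 := by
  ext l l'
  rw [Matrix.submatrix_apply, Matrix.one_apply]
  by_cases hll : l = l'
  · subst hll
    rw [if_pos rfl]
    rw [patM_entry_eq pos hpos _ l.1 (bipMk_row_col (pos l.1)).symm]
    unfold charVec
    rw [if_pos (hSU l.2)]
  · rw [if_neg hll]
    apply patM_entry_zero
    intro l'' hl''
    unfold charVec
    rw [if_neg]
    intro hU
    exact hll (Subtype.ext (huniq l.1 l.2 l'.1 l'.2 l'' hU hl''))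

/-- extracting a matchbox from a nonzero minor of the generic matrix -/
lemma exists_labels_of_det_ne_zero (F : Type*) [Field F] {ι : Type*} [Fintype ι] [DecidableEq ι]
    (f : ι → Fin m) (g : ι → Fin p ⊕ Fin q)
    (h : (((patM pos (fun l => (MvPolynomial.X l : MvPolynomial (Fin n) F))).submatrix f g)).det ≠ 0) :
    ∃ (ℓ : ι → Fin n) (σ : Equiv.Perm ι), ∀ i, pos (ℓ i) = bipMk (f (σ i)) (g i) := by
  classical
  rw [Matrix.det_apply] at h
  obtain ⟨σ, -, hσ⟩ := Finset.exists_ne_zero_of_sum_ne_zero h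
  have hprod : ∀ i : ι, ((patM pos (fun l => (MvPolynomial.X l : MvPolynomial (Fin n) F))).submatrix f g) (σ i) i ≠ 0 := by
    intro i
    intro hzero
    apply hσ
    have hz : (∏ j : ι, ((patM pos (fun l => (MvPolynomial.X l : MvPolynomial (Fin n) F))).submatrix f g) (σ j) j) = 0 :=
      Finset.prod_eq_zero (Finset.mem_univ i) hzero
    rw [hz]
    simp
  have hex : ∀ i : ι, ∃ l, pos l = bipMk (f (σ i)) (g i) := by
    intro i
    by_contra hno
    push_neg at hno
    apply hprod i
    rw [Matrix.submatrix_apply]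
    exact patM_entry_zero pos _ (fun l hl => absurd hl (hno l))
  choose ℓ hℓ using hex
  exact ⟨ℓ, σ, hℓ⟩

end Pattern


section Bridge
variable {m p q n : ℕ} (pos : Fin n → BipPos m p q)

lemma isRight_iff_not_isLeft {α β : Type*} (x : α ⊕ β) : x.isRight ↔ ¬ x.isLeft := by
  cases x <;> simp

lemma isLeft_bipMk (i : Fin m) (c : Fin p ⊕ Fin q) :
    (bipMk i c : BipPos m p q).isLeft = c.isLeft := by cases c <;> rfl

lemma isRight_bipMk (i : Fin m) (c : Fin p ⊕ Fin q) :
    (bipMk i c : BipPos m p q).isRight = c.isRight := by cases c <;> rfl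

lemma isLeft_posCol (x : BipPos m p q) : (posCol x).isLeft = x.isLeft := by cases x <;> rfl

lemma isRight_posCol (x : BipPos m p q) : (posCol x).isRight = x.isRight := by cases x <;> rfl

lemma posCol_eq_inl (x : BipPos m p q) (h : x.isLeft) :
    posCol x = Sum.inl ((x.getLeft h).2) := by
  cases x with
  | inl y => rfl
  | inr y => simp [Sum.isLeft] at h

lemma posCol_eq_inr (x : BipPos m p q) (h : x.isRight) :
    posCol x = Sum.inr ((x.getRight h).2) := by
  cases x with
  | inl y => simp [Sum.isRight] at h
  | inr y => rfl

lemma isMatchbox_iff (S : Finset (Fin n)) :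
    IsMatchbox pos S ↔ (Set.InjOn (fun l => posRow (pos l)) ↑S ∧
      Set.InjOn (fun l => posCol (pos l)) ↑S) := by
  constructor
  · intro h
    constructor
    · intro x hx y hy hxy
      by_contra hne
      exact (h x (Finset.mem_coe.mp hx) y (Finset.mem_coe.mp hy) hne).1 hxy
    · intro x hx y hy hxy
      by_contra hne
      exact (h x (Finset.mem_coe.mp hx) y (Finset.mem_coe.mp hy) hne).2 hxy
  · rintro ⟨h1, h2⟩ l hl l' hl' hne
    exact ⟨fun h => hne (h1 (Finset.mem_coe.mpr hl) (Finset.mem_coe.mpr hl') h),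
      fun h => hne (h2 (Finset.mem_coe.mpr hl) (Finset.mem_coe.mpr hl') h)⟩

lemma isLeftMatchbox_iff (S : Finset (Fin n)) :
    IsLeftMatchbox pos S ↔ IsMB (Finset.univ.filter fun l => (pos l).isLeft)
      (fun l => posRow (pos l)) (fun l => posCol (pos l)) S := by
  unfold IsLeftMatchbox IsMB
  rw [isMatchbox_iff]
  constructor
  · rintro ⟨⟨h1, h2⟩, h3⟩
    exact ⟨fun l hl => Finset.mem_filter.mpr ⟨Finset.mem_univ l, h3 l hl⟩, h1, h2⟩
  · rintro ⟨h0, h1, h2⟩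
    exact ⟨⟨h1, h2⟩, fun l hl => (Finset.mem_filter.mp (h0 hl)).2⟩

lemma isRightMatchbox_iff (S : Finset (Fin n)) :
    IsRightMatchbox pos S ↔ IsMB (Finset.univ.filter fun l => (pos l).isRight)
      (fun l => posRow (pos l)) (fun l => posCol (pos l)) S := by
  unfold IsRightMatchbox IsMB
  rw [isMatchbox_iff]
  constructor
  · rintro ⟨⟨h1, h2⟩, h3⟩
    exact ⟨fun l hl => Finset.mem_filter.mpr ⟨Finset.mem_univ l, h3 l hl⟩, h1, h2⟩
  · rintro ⟨h0, h1, h2⟩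
    exact ⟨⟨h1, h2⟩, fun l hl => (Finset.mem_filter.mp (h0 hl)).2⟩

lemma patA_submatrix_eq {R : Type*} [CommRing R] (a : Fin n → R) (S : Finset (Fin n))
    (hleft : ∀ l ∈ S, (pos l).isLeft) :
    (patA pos a).submatrix (fun l : {x // x ∈ S} => posRow (pos l.1))
      (fun l : {x // x ∈ S} => ((pos l.1).getLeft (hleft l.1 l.2)).2)
    = (patM pos a).submatrix (fun l : {x // x ∈ S} => posRow (pos l.1))
      (fun l : {x // x ∈ S} => posCol (pos l.1)) := by
  ext l l'
  rw [Matrix.submatrix_apply, Matrix.submatrix_apply, patA_eq_patM]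
  congr 1
  exact (posCol_eq_inl _ _).symm

lemma patB_submatrix_eq {R : Type*} [CommRing R] (a : Fin n → R) (S : Finset (Fin n))
    (hright : ∀ l ∈ S, (pos l).isRight) :
    (patB pos a).submatrix (fun l : {x // x ∈ S} => posRow (pos l.1))
      (fun l : {x // x ∈ S} => ((pos l.1).getRight (hright l.1 l.2)).2)
    = (patM pos a).submatrix (fun l : {x // x ∈ S} => posRow (pos l.1))
      (fun l : {x // x ∈ S} => posCol (pos l.1)) := by
  ext l l'
  rw [Matrix.submatrix_apply, Matrix.submatrix_apply, patB_eq_patM]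
  congr 1
  exact (posCol_eq_inr _ _).symm

lemma isUnit_generic_patM_submatrix (F : Type*) [Field F] (hpos : Function.Injective pos)
    (U S : Finset (Fin n)) (hSU : S ⊆ U)
    (huniq : ∀ l ∈ S, ∀ l' ∈ S, ∀ l'' ∈ U,
      pos l'' = bipMk (posRow (pos l)) (posCol (pos l')) → l = l') :
    IsUnit ((patM pos (genericX F n)).submatrix
      (fun l : {x // x ∈ S} => posRow (pos l.1))
      (fun l : {x // x ∈ S} => posCol (pos l.1))) := by
  classical
  set Pm : Matrix (Fin m) (Fin p ⊕ Fin q) (MvPolynomial (Fin n) F) :=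
    patM pos (fun l => MvPolynomial.X l) with hPm
  set rowS := (fun l : {x // x ∈ S} => posRow (pos l.1)) with hrowS
  set colS := (fun l : {x // x ∈ S} => posCol (pos l.1)) with hcolS
  have hmapev : (Pm.submatrix rowS colS).map (MvPolynomial.eval (charVec F U))
      = (patM pos (charVec F U)).submatrix rowS colS := by
    have h1 : Pm.map (MvPolynomial.eval (charVec F U)) = patM pos (charVec F U) := by
      rw [hPm, patM_map]
      congr 1
      funext l
      simp
    rw [← h1]
    rfl
  have hdet : (Pm.submatrix rowS colS).det ≠ 0 := by
    intro h0
    have h1 : ((Pm.submatrix rowS colS).map (MvPolynomial.eval (charVec F U))).det = (0 : F) := by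
      rw [← RingHom.mapMatrix_apply, ← RingHom.map_det, h0, map_zero]
    rw [hmapev, patM_submatrix_eq_one pos hpos F U S hSU huniq, Matrix.det_one] at h1
    exact one_ne_zero h1
  have hgen : patM pos (genericX F n)
      = Pm.map (algebraMap (MvPolynomial (Fin n) F) (FractionRing (MvPolynomial (Fin n) F))) := by
    rw [hPm, patM_map]
    rfl
  rw [Matrix.isUnit_iff_isUnit_det, isUnit_iff_ne_zero]
  have h2 : ((patM pos (genericX F n)).submatrix rowS colS).det
      = algebraMap (MvPolynomial (Fin n) F) (FractionRing (MvPolynomial (Fin n) F))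
          (Pm.submatrix rowS colS).det := by
    rw [hgen, RingHom.map_det, RingHom.mapMatrix_apply]
    rfl
  rw [h2]
  exact (map_ne_zero_iff _ (IsFractionRing.injective _ _)).mpr hdet

end Bridge

/-- equations (21)–(22) of the paper: for an optimal pair `(𝒜, ℬ)`
of largest matchboxes, `rank A(ε_{𝒜∪ℬ}) = |𝒜| = r_A`, `rank B(ε_{𝒜∪ℬ}) = |ℬ| = r_B`,
and `rank M(ε_{𝒜∪ℬ}) = |𝒜⋓ℬ| = r_M` (ranks over `F`). -/
theorem stmt_13 (F : Type*) [Field F] (m p q n : ℕ) (pos : Fin n → BipPos m p q)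
    (hpos : Function.Injective pos) (𝒜 ℬ : Finset (Fin n))
    (hopt : IsOptimalPair pos 𝒜 ℬ) :
    ((patA pos (charVec F (𝒜 ∪ ℬ))).rank = 𝒜.card ∧ 𝒜.card = genRankA F pos) ∧
    ((patB pos (charVec F (𝒜 ∪ ℬ))).rank = ℬ.card ∧ ℬ.card = genRankB F pos) ∧
    ((patM pos (charVec F (𝒜 ∪ ℬ))).rank = (mcup pos 𝒜 ℬ).card ∧
      (mcup pos 𝒜 ℬ).card = genRankM F pos) := by
  classical
  obtain ⟨hLA, hLB, hmin⟩ := hopt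
  obtain ⟨⟨hAmb, hAleft⟩, hAmax⟩ := hLA
  obtain ⟨⟨hBmb, hBright⟩, hBmax⟩ := hLB
  obtain ⟨hARinj, hACinj⟩ := (isMatchbox_iff pos 𝒜).mp hAmb
  obtain ⟨hBRinj, hBCinj⟩ := (isMatchbox_iff pos ℬ).mp hBmb
  have hAU : 𝒜 ⊆ 𝒜 ∪ ℬ := Finset.subset_union_left
  have hBU : ℬ ⊆ 𝒜 ∪ ℬ := Finset.subset_union_right
  have hnotLR : ∀ x : BipPos m p q, x.isLeft → x.isRight → False := by
    intro x h1 h2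
    cases x <;> simp_all
  have hUleft : ∀ l ∈ 𝒜 ∪ ℬ, (pos l).isLeft → l ∈ 𝒜 := by
    intro l hl h
    rcases Finset.mem_union.mp hl with h' | h'
    · exact h'
    · exact (hnotLR _ h (hBright l h')).elim
  have hUright : ∀ l ∈ 𝒜 ∪ ℬ, (pos l).isRight → l ∈ ℬ := by
    intro l hl h
    rcases Finset.mem_union.mp hl with h' | h'
    · exact (hnotLR _ (hAleft l h') h).elim
    · exact h'
  have huniqA : ∀ l ∈ 𝒜, ∀ l' ∈ 𝒜, ∀ l'' ∈ 𝒜 ∪ ℬ,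
      pos l'' = bipMk (posRow (pos l)) (posCol (pos l')) → l = l' := by
    intro l hl l' hl' l'' hl'' he
    have hrow : posRow (pos l'') = posRow (pos l) := by rw [he, posRow_bipMk]
    have hcol : posCol (pos l'') = posCol (pos l') := by rw [he, posCol_bipMk]
    have hleft'' : (pos l'').isLeft := by
      rw [he, isLeft_bipMk, isLeft_posCol]
      exact hAleft l' hl'
    have hl''A : l'' ∈ 𝒜 := hUleft l'' hl'' hleft''
    have h1 : l'' = l' := hACinj (Finset.mem_coe.mpr hl''A) (Finset.mem_coe.mpr hl') hcol
    subst h1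
    exact hARinj (Finset.mem_coe.mpr hl) (Finset.mem_coe.mpr hl''A) hrow.symm
  have huniqB : ∀ l ∈ ℬ, ∀ l' ∈ ℬ, ∀ l'' ∈ 𝒜 ∪ ℬ,
      pos l'' = bipMk (posRow (pos l)) (posCol (pos l')) → l = l' := by
    intro l hl l' hl' l'' hl'' he
    have hrow : posRow (pos l'') = posRow (pos l) := by rw [he, posRow_bipMk]
    have hcol : posCol (pos l'') = posCol (pos l') := by rw [he, posCol_bipMk]
    have hright'' : (pos l'').isRight := by
      rw [he, isRight_bipMk, isRight_posCol]
      exact hBright l' hl'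
    have hl''B : l'' ∈ ℬ := hUright l'' hl'' hright''
    have h1 : l'' = l' := hBCinj (Finset.mem_coe.mpr hl''B) (Finset.mem_coe.mpr hl') hcol
    subst h1
    exact hBRinj (Finset.mem_coe.mpr hl) (Finset.mem_coe.mpr hl''B) hrow.symm
  -- mcup basic facts
  have hmcA : 𝒜 ⊆ mcup pos 𝒜 ℬ := Finset.subset_union_left
  have hmcU : mcup pos 𝒜 ℬ ⊆ 𝒜 ∪ ℬ :=
    Finset.union_subset hAU ((Finset.filter_subset _ _).trans hBU)
  have hmcB : ∀ l ∈ mcup pos 𝒜 ℬ, l ∈ 𝒜 ∨ (l ∈ ℬ ∧ posRow (pos l) ∉ rowSet pos 𝒜) := by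
    intro l hl
    rcases Finset.mem_union.mp hl with h | h
    · exact Or.inl h
    · exact Or.inr (Finset.mem_filter.mp h)
  have hmcRinj : Set.InjOn (fun l => posRow (pos l)) ↑(mcup pos 𝒜 ℬ) := by
    intro x hx y hy hxy
    rcases hmcB x (Finset.mem_coe.mp hx) with hx' | ⟨hx', hxr⟩ <;>
      rcases hmcB y (Finset.mem_coe.mp hy) with hy' | ⟨hy', hyr⟩
    · exact hARinj (Finset.mem_coe.mpr hx') (Finset.mem_coe.mpr hy') hxy
    · exact absurd (Finset.mem_image.mpr ⟨x, hx', hxy⟩) hyr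
    · exact absurd (Finset.mem_image.mpr ⟨y, hy', hxy.symm⟩) hxr
    · exact hBRinj (Finset.mem_coe.mpr hx') (Finset.mem_coe.mpr hy') hxy
  have hmcCinj : Set.InjOn (fun l => posCol (pos l)) ↑(mcup pos 𝒜 ℬ) := by
    intro x hx y hy hxy
    have hLL : (pos x).isLeft = (pos y).isLeft := by
      rw [← isLeft_posCol, ← isLeft_posCol]
      exact congrArg Sum.isLeft hxy
    rcases hmcB x (Finset.mem_coe.mp hx) with hx' | ⟨hx', _⟩ <;>
      rcases hmcB y (Finset.mem_coe.mp hy) with hy' | ⟨hy', _⟩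
    · exact hACinj (Finset.mem_coe.mpr hx') (Finset.mem_coe.mpr hy') hxy
    · refine ((hnotLR (pos y)) ?_ (hBright y hy')).elim
      rw [← hLL]
      exact hAleft x hx'
    · refine ((hnotLR (pos x)) ?_ (hBright x hx')).elim
      rw [hLL]
      exact hAleft y hy'
    · exact hBCinj (Finset.mem_coe.mpr hx') (Finset.mem_coe.mpr hy') hxy
  have huniqM : ∀ l ∈ mcup pos 𝒜 ℬ, ∀ l' ∈ mcup pos 𝒜 ℬ, ∀ l'' ∈ 𝒜 ∪ ℬ,
      pos l'' = bipMk (posRow (pos l)) (posCol (pos l')) → l = l' := by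
    intro l hl l' hl' l'' hl'' he
    have hrow : posRow (pos l'') = posRow (pos l) := by rw [he, posRow_bipMk]
    have hcol : posCol (pos l'') = posCol (pos l') := by rw [he, posCol_bipMk]
    rcases hmcB l' hl' with hl'A | ⟨hl'B, _⟩
    · have hleft'' : (pos l'').isLeft := by
        rw [he, isLeft_bipMk, isLeft_posCol]
        exact hAleft l' hl'A
      have hl''A : l'' ∈ 𝒜 := hUleft l'' hl'' hleft''
      have h1 : l'' = l' := hACinj (Finset.mem_coe.mpr hl''A) (Finset.mem_coe.mpr hl'A) hcol
      subst h1
      exact hmcRinj (Finset.mem_coe.mpr hl) (Finset.mem_coe.mpr hl') hrow.symm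
    · have hright'' : (pos l'').isRight := by
        rw [he, isRight_bipMk, isRight_posCol]
        exact hBright l' hl'B
      have hl''B : l'' ∈ ℬ := hUright l'' hl'' hright''
      have h1 : l'' = l' := hBCinj (Finset.mem_coe.mpr hl''B) (Finset.mem_coe.mpr hl'B) hcol
      subst h1
      exact hmcRinj (Finset.mem_coe.mpr hl) (Finset.mem_coe.mpr hl') hrow.symm
  -- card facts about row images
  have hcardA_row : (𝒜.image (fun l => posRow (pos l))).card = 𝒜.card :=
    Finset.card_image_of_injOn hARinj
  have hcardB_row : (ℬ.image (fun l => posRow (pos l))).card = ℬ.card :=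
    Finset.card_image_of_injOn hBRinj
  have hmc_row_eq : (mcup pos 𝒜 ℬ).image (fun l => posRow (pos l))
      = (𝒜 ∪ ℬ).image (fun l => posRow (pos l)) := by
    apply Finset.Subset.antisymm
    · exact Finset.image_subset_image hmcU
    · intro x hx
      obtain ⟨l, hlU, rfl⟩ := Finset.mem_image.mp hx
      rcases Finset.mem_union.mp hlU with h | h
      · exact Finset.mem_image.mpr ⟨l, hmcA h, rfl⟩
      · by_cases hr : posRow (pos l) ∈ rowSet pos 𝒜
        · obtain ⟨l0, hl0, hl0r⟩ := Finset.mem_image.mp hr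
          exact Finset.mem_image.mpr ⟨l0, hmcA hl0, hl0r⟩
        · exact Finset.mem_image.mpr
            ⟨l, Finset.mem_union_right _ (Finset.mem_filter.mpr ⟨h, hr⟩), rfl⟩
  have hcard_mcup : ((𝒜 ∪ ℬ).image (fun l => posRow (pos l))).card = (mcup pos 𝒜 ℬ).card := by
    rw [← hmc_row_eq]
    exact Finset.card_image_of_injOn hmcRinj
  have hmv : (mcup pos 𝒜 ℬ).card + vCommon pos 𝒜 ℬ = 𝒜.card + ℬ.card := by
    have h1 := Finset.card_union_add_card_inter (𝒜.image (fun l => posRow (pos l)))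
      (ℬ.image (fun l => posRow (pos l)))
    rw [← Finset.image_union] at h1
    rw [hcard_mcup, hcardA_row, hcardB_row] at h1
    exact h1
  -- the combinatorial core
  have hAMB : IsMB (Finset.univ.filter fun l => (pos l).isLeft)
      (fun l => posRow (pos l)) (fun l => posCol (pos l)) 𝒜 :=
    (isLeftMatchbox_iff pos 𝒜).mp ⟨hAmb, hAleft⟩
  have hBMB : IsMB (Finset.univ.filter fun l => (pos l).isRight)
      (fun l => posRow (pos l)) (fun l => posCol (pos l)) ℬ :=
    (isRightMatchbox_iff pos ℬ).mp ⟨hBmb, hBright⟩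
  have hcore : ∀ C : Finset (Fin n), Set.InjOn (fun l => posRow (pos l)) ↑C →
      Set.InjOn (fun l => posCol (pos l)) ↑C → C.card ≤ (mcup pos 𝒜 ℬ).card := by
    intro C hCR hCC
    set CA := C.filter (fun l => (pos l).isLeft) with hCAdef
    set CB := C.filter (fun l => (pos l).isRight) with hCBdef
    have hsplit : CA.card + CB.card = C.card := by
      rw [hCAdef, hCBdef]
      have heq : C.filter (fun l => (pos l).isRight) = C.filter (fun l => ¬ (pos l).isLeft) := by
        apply Finset.filter_congr
        intro l _
        exact isRight_iff_not_isLeft (pos l)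
      rw [heq]
      exact Finset.card_filter_add_card_filter_not _
    have hCAsub : ↑CA ⊆ (↑C : Set (Fin n)) := by
      intro x hx
      exact Finset.mem_coe.mpr (Finset.mem_filter.mp (Finset.mem_coe.mp hx)).1
    have hCBsub : ↑CB ⊆ (↑C : Set (Fin n)) := by
      intro x hx
      exact Finset.mem_coe.mpr (Finset.mem_filter.mp (Finset.mem_coe.mp hx)).1
    have hCA_MB : IsMB (Finset.univ.filter fun l => (pos l).isLeft)
        (fun l => posRow (pos l)) (fun l => posCol (pos l)) CA :=
      ⟨fun l hl => Finset.mem_filter.mpr ⟨Finset.mem_univ _, (Finset.mem_filter.mp hl).2⟩,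
        hCR.mono hCAsub, hCC.mono hCAsub⟩
    have hCB_MB : IsMB (Finset.univ.filter fun l => (pos l).isRight)
        (fun l => posRow (pos l)) (fun l => posCol (pos l)) CB :=
      ⟨fun l hl => Finset.mem_filter.mpr ⟨Finset.mem_univ _, (Finset.mem_filter.mp hl).2⟩,
        hCR.mono hCBsub, hCC.mono hCBsub⟩
    have hCAcard : CA.card ≤ 𝒜.card := hAmax CA ((isLeftMatchbox_iff pos CA).mpr hCA_MB)
    have hCBcard : CB.card ≤ ℬ.card := hBmax CB ((isRightMatchbox_iff pos CB).mpr hCB_MB)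
    obtain ⟨𝒜', h𝒜'MB, h𝒜'card, h𝒜'sub⟩ := ext_iter hCA_MB hAMB (𝒜.card - CA.card) (by omega)
    obtain ⟨ℬ', hℬ'MB, hℬ'card, hℬ'sub⟩ := ext_iter hCB_MB hBMB (ℬ.card - CB.card) (by omega)
    have h𝒜'c : 𝒜'.card = 𝒜.card := by omega
    have hℬ'c : ℬ'.card = ℬ.card := by omega
    have h𝒜'L : IsLargestLeft pos 𝒜' :=
      ⟨(isLeftMatchbox_iff pos 𝒜').mpr h𝒜'MB,
        fun T hT => (hAmax T hT).trans (le_of_eq h𝒜'c.symm)⟩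
    have hℬ'L : IsLargestRight pos ℬ' :=
      ⟨(isRightMatchbox_iff pos ℬ').mpr hℬ'MB,
        fun T hT => (hBmax T hT).trans (le_of_eq hℬ'c.symm)⟩
    have hv := hmin 𝒜' ℬ' h𝒜'L hℬ'L
    have hdisj : ∀ x, x ∈ CA.image (fun l => posRow (pos l)) →
        x ∈ CB.image (fun l => posRow (pos l)) → False := by
      intro x h1 h2
      obtain ⟨a, ha, har⟩ := Finset.mem_image.mp h1
      obtain ⟨b, hb, hbr⟩ := Finset.mem_image.mp h2
      have hab : a = b := hCR (hCAsub (Finset.mem_coe.mpr ha)) (hCBsub (Finset.mem_coe.mpr hb))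
        (har.trans hbr.symm)
      subst hab
      exact hnotLR (pos a) (Finset.mem_filter.mp ha).2 (Finset.mem_filter.mp hb).2
    have hsubv : vCommon pos 𝒜' ℬ' ≤ (𝒜.card - CA.card) + (ℬ.card - CB.card) := by
      have hsubset : rowSet pos 𝒜' ∩ rowSet pos ℬ' ⊆
          (𝒜'.image (fun l => posRow (pos l)) \ CA.image (fun l => posRow (pos l))) ∪
          (ℬ'.image (fun l => posRow (pos l)) \ CB.image (fun l => posRow (pos l))) := by
        intro x hx
        obtain ⟨hx1, hx2⟩ := Finset.mem_inter.mp hx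
        by_cases hxa : x ∈ CA.image (fun l => posRow (pos l))
        · by_cases hxb : x ∈ CB.image (fun l => posRow (pos l))
          · exact (hdisj x hxa hxb).elim
          · exact Finset.mem_union.mpr (Or.inr (Finset.mem_sdiff.mpr ⟨hx2, hxb⟩))
        · exact Finset.mem_union.mpr (Or.inl (Finset.mem_sdiff.mpr ⟨hx1, hxa⟩))
      have hXcard : (𝒜'.image (fun l => posRow (pos l)) \
          CA.image (fun l => posRow (pos l))).card = 𝒜.card - CA.card := by
        rw [Finset.card_sdiff_of_subset h𝒜'sub, card_rws h𝒜'MB, card_rws hCA_MB, h𝒜'c]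
      have hYcard : (ℬ'.image (fun l => posRow (pos l)) \
          CB.image (fun l => posRow (pos l))).card = ℬ.card - CB.card := by
        rw [Finset.card_sdiff_of_subset hℬ'sub, card_rws hℬ'MB, card_rws hCB_MB, hℬ'c]
      calc vCommon pos 𝒜' ℬ' ≤ ((𝒜'.image (fun l => posRow (pos l)) \
              CA.image (fun l => posRow (pos l))) ∪
            (ℬ'.image (fun l => posRow (pos l)) \
              CB.image (fun l => posRow (pos l)))).card := Finset.card_le_card hsubset
        _ ≤ _ := Finset.card_union_le _ _
        _ = (𝒜.card - CA.card) + (ℬ.card - CB.card) := by rw [hXcard, hYcard]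
    omega
  -- === the six statements ===
  -- A lower
  have hAlow : 𝒜.card ≤ (patA pos (charVec F (𝒜 ∪ ℬ))).rank := by
    have h1 := patM_submatrix_eq_one pos hpos F (𝒜 ∪ ℬ) 𝒜 hAU huniqA
    have h3 : IsUnit ((patA pos (charVec F (𝒜 ∪ ℬ))).submatrix
        (fun l : {x // x ∈ 𝒜} => posRow (pos l.1))
        (fun l : {x // x ∈ 𝒜} => ((pos l.1).getLeft (hAleft l.1 l.2)).2)) := by
      rw [patA_submatrix_eq pos (charVec F (𝒜 ∪ ℬ)) 𝒜 hAleft, h1]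
      exact isUnit_one
    have h4 := card_le_rank_of_unit_submatrix _ _ _ h3
    rwa [Fintype.card_coe] at h4
  -- A upper
  have hAup : (patA pos (charVec F (𝒜 ∪ ℬ))).rank ≤ 𝒜.card := by
    refine le_trans (rank_le_card_rows_support _ (𝒜.image (fun l => posRow (pos l))) ?_)
      (le_of_eq hcardA_row)
    intro i j hne
    rw [patA_eq_patM] at hne
    by_contra hmem
    apply hne
    apply patM_entry_zero
    intro l hl
    unfold charVec
    rw [if_neg]
    intro hlU
    have hleft : (pos l).isLeft := by
      rw [hl]
      exact bipMk_isLeft i j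
    have hlA : l ∈ 𝒜 := hUleft l hlU hleft
    exact hmem (Finset.mem_image.mpr ⟨l, hlA, by rw [hl, posRow_bipMk]⟩)
  -- A generic lower
  have hAgenlow : 𝒜.card ≤ genRankA F pos := by
    unfold genRankA
    have h3 : IsUnit ((patA pos (genericX F n)).submatrix
        (fun l : {x // x ∈ 𝒜} => posRow (pos l.1))
        (fun l : {x // x ∈ 𝒜} => ((pos l.1).getLeft (hAleft l.1 l.2)).2)) := by
      rw [patA_submatrix_eq pos (genericX F n) 𝒜 hAleft]
      exact isUnit_generic_patM_submatrix pos F hpos (𝒜 ∪ ℬ) 𝒜 hAU huniqA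
    have h4 := card_le_rank_of_unit_submatrix _ _ _ h3
    rwa [Fintype.card_coe] at h4
  -- A generic upper
  have hAgenhigh : genRankA F pos ≤ 𝒜.card := by
    unfold genRankA
    obtain ⟨f, g, hfinj, hginj, hunit⟩ := exists_unit_submatrix (patA pos (genericX F n))
    have hdetK : ((patA pos (genericX F n)).submatrix f g).det ≠ 0 := by
      rw [Matrix.isUnit_iff_isUnit_det, isUnit_iff_ne_zero] at hunit
      exact hunit
    have heq : (patA pos (genericX F n)).submatrix f g
        = (((patM pos (fun l => (MvPolynomial.X l : MvPolynomial (Fin n) F))).submatrix f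
            (fun i => Sum.inl (g i))).map
          (algebraMap (MvPolynomial (Fin n) F) (FractionRing (MvPolynomial (Fin n) F)))) := by
      have hgen : patM pos (genericX F n)
          = (patM pos (fun l => (MvPolynomial.X l : MvPolynomial (Fin n) F))).map
            (algebraMap (MvPolynomial (Fin n) F) (FractionRing (MvPolynomial (Fin n) F))) := by
        rw [patM_map]
        rfl
      ext i j
      rw [Matrix.submatrix_apply, patA_eq_patM, hgen]
      rfl
    have hdetP : (((patM pos (fun l => (MvPolynomial.X l : MvPolynomial (Fin n) F))).submatrix f
        (fun i => Sum.inl (g i)))).det ≠ 0 := by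
      intro h0
      apply hdetK
      rw [heq, ← RingHom.mapMatrix_apply, ← RingHom.map_det, h0, map_zero]
    obtain ⟨ℓ, σ, hℓ⟩ := exists_labels_of_det_ne_zero pos F f (fun i => Sum.inl (g i)) hdetP
    have hℓinj : Function.Injective ℓ := by
      intro i i' h
      have h2 := congrArg pos h
      rw [hℓ i, hℓ i'] at h2
      have hcol := congrArg posCol h2
      rw [posCol_bipMk, posCol_bipMk] at hcol
      exact hginj (Sum.inl_injective hcol)
    have hCcard : (Finset.image ℓ Finset.univ).card = (patA pos (genericX F n)).rank := by
      rw [Finset.card_image_of_injective _ hℓinj, Finset.card_univ, Fintype.card_fin]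
    have hCleft : IsLeftMatchbox pos (Finset.image ℓ Finset.univ) := by
      constructor
      · intro x hx y hy hne
        obtain ⟨i, -, rfl⟩ := Finset.mem_image.mp hx
        obtain ⟨i', -, rfl⟩ := Finset.mem_image.mp hy
        have hii : i ≠ i' := fun h => hne (congrArg ℓ h)
        constructor
        · rw [hℓ i, hℓ i', posRow_bipMk, posRow_bipMk]
          exact fun h => hii (σ.injective (hfinj h))
        · rw [hℓ i, hℓ i', posCol_bipMk, posCol_bipMk]
          exact fun h => hii (hginj (Sum.inl_injective h))
      · intro x hx
        obtain ⟨i, -, rfl⟩ := Finset.mem_image.mp hx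
        rw [hℓ i]
        exact bipMk_isLeft _ _
    have h5 := hAmax _ hCleft
    omega
  -- B lower
  have hBlow : ℬ.card ≤ (patB pos (charVec F (𝒜 ∪ ℬ))).rank := by
    have h1 := patM_submatrix_eq_one pos hpos F (𝒜 ∪ ℬ) ℬ hBU huniqB
    have h3 : IsUnit ((patB pos (charVec F (𝒜 ∪ ℬ))).submatrix
        (fun l : {x // x ∈ ℬ} => posRow (pos l.1))
        (fun l : {x // x ∈ ℬ} => ((pos l.1).getRight (hBright l.1 l.2)).2)) := by
      rw [patB_submatrix_eq pos (charVec F (𝒜 ∪ ℬ)) ℬ hBright, h1]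
      exact isUnit_one
    have h4 := card_le_rank_of_unit_submatrix _ _ _ h3
    rwa [Fintype.card_coe] at h4
  -- B upper
  have hBup : (patB pos (charVec F (𝒜 ∪ ℬ))).rank ≤ ℬ.card := by
    refine le_trans (rank_le_card_rows_support _ (ℬ.image (fun l => posRow (pos l))) ?_)
      (le_of_eq hcardB_row)
    intro i k hne
    rw [patB_eq_patM] at hne
    by_contra hmem
    apply hne
    apply patM_entry_zero
    intro l hl
    unfold charVec
    rw [if_neg]
    intro hlU
    have hright : (pos l).isRight := by
      rw [hl]
      exact bipMk_isRight i k
    have hlB : l ∈ ℬ := hUright l hlU hright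
    exact hmem (Finset.mem_image.mpr ⟨l, hlB, by rw [hl, posRow_bipMk]⟩)
  -- B generic lower
  have hBgenlow : ℬ.card ≤ genRankB F pos := by
    unfold genRankB
    have h3 : IsUnit ((patB pos (genericX F n)).submatrix
        (fun l : {x // x ∈ ℬ} => posRow (pos l.1))
        (fun l : {x // x ∈ ℬ} => ((pos l.1).getRight (hBright l.1 l.2)).2)) := by
      rw [patB_submatrix_eq pos (genericX F n) ℬ hBright]
      exact isUnit_generic_patM_submatrix pos F hpos (𝒜 ∪ ℬ) ℬ hBU huniqB
    have h4 := card_le_rank_of_unit_submatrix _ _ _ h3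
    rwa [Fintype.card_coe] at h4
  -- B generic upper
  have hBgenhigh : genRankB F pos ≤ ℬ.card := by
    unfold genRankB
    obtain ⟨f, g, hfinj, hginj, hunit⟩ := exists_unit_submatrix (patB pos (genericX F n))
    have hdetK : ((patB pos (genericX F n)).submatrix f g).det ≠ 0 := by
      rw [Matrix.isUnit_iff_isUnit_det, isUnit_iff_ne_zero] at hunit
      exact hunit
    have heq : (patB pos (genericX F n)).submatrix f g
        = (((patM pos (fun l => (MvPolynomial.X l : MvPolynomial (Fin n) F))).submatrix f
            (fun i => Sum.inr (g i))).map
          (algebraMap (MvPolynomial (Fin n) F) (FractionRing (MvPolynomial (Fin n) F)))) := by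
      have hgen : patM pos (genericX F n)
          = (patM pos (fun l => (MvPolynomial.X l : MvPolynomial (Fin n) F))).map
            (algebraMap (MvPolynomial (Fin n) F) (FractionRing (MvPolynomial (Fin n) F))) := by
        rw [patM_map]
        rfl
      ext i k
      rw [Matrix.submatrix_apply, patB_eq_patM, hgen]
      rfl
    have hdetP : (((patM pos (fun l => (MvPolynomial.X l : MvPolynomial (Fin n) F))).submatrix f
        (fun i => Sum.inr (g i)))).det ≠ 0 := by
      intro h0
      apply hdetK
      rw [heq, ← RingHom.mapMatrix_apply, ← RingHom.map_det, h0, map_zero]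
    obtain ⟨ℓ, σ, hℓ⟩ := exists_labels_of_det_ne_zero pos F f (fun i => Sum.inr (g i)) hdetP
    have hℓinj : Function.Injective ℓ := by
      intro i i' h
      have h2 := congrArg pos h
      rw [hℓ i, hℓ i'] at h2
      have hcol := congrArg posCol h2
      rw [posCol_bipMk, posCol_bipMk] at hcol
      exact hginj (Sum.inr_injective hcol)
    have hCcard : (Finset.image ℓ Finset.univ).card = (patB pos (genericX F n)).rank := by
      rw [Finset.card_image_of_injective _ hℓinj, Finset.card_univ, Fintype.card_fin]
    have hCright : IsRightMatchbox pos (Finset.image ℓ Finset.univ) := by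
      constructor
      · intro x hx y hy hne
        obtain ⟨i, -, rfl⟩ := Finset.mem_image.mp hx
        obtain ⟨i', -, rfl⟩ := Finset.mem_image.mp hy
        have hii : i ≠ i' := fun h => hne (congrArg ℓ h)
        constructor
        · rw [hℓ i, hℓ i', posRow_bipMk, posRow_bipMk]
          exact fun h => hii (σ.injective (hfinj h))
        · rw [hℓ i, hℓ i', posCol_bipMk, posCol_bipMk]
          exact fun h => hii (hginj (Sum.inr_injective h))
      · intro x hx
        obtain ⟨i, -, rfl⟩ := Finset.mem_image.mp hx
        rw [hℓ i]
        exact bipMk_isRight _ _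
    have h5 := hBmax _ hCright
    omega
  -- M lower
  have hMlow : (mcup pos 𝒜 ℬ).card ≤ (patM pos (charVec F (𝒜 ∪ ℬ))).rank := by
    have h1 := patM_submatrix_eq_one pos hpos F (𝒜 ∪ ℬ) (mcup pos 𝒜 ℬ) hmcU huniqM
    have h3 : IsUnit ((patM pos (charVec F (𝒜 ∪ ℬ))).submatrix
        (fun l : {x // x ∈ mcup pos 𝒜 ℬ} => posRow (pos l.1))
        (fun l : {x // x ∈ mcup pos 𝒜 ℬ} => posCol (pos l.1))) := by
      rw [h1]
      exact isUnit_one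
    have h4 := card_le_rank_of_unit_submatrix _ _ _ h3
    rwa [Fintype.card_coe] at h4
  -- M upper
  have hMup : (patM pos (charVec F (𝒜 ∪ ℬ))).rank ≤ (mcup pos 𝒜 ℬ).card := by
    refine le_trans (rank_le_card_rows_support _ ((𝒜 ∪ ℬ).image (fun l => posRow (pos l))) ?_)
      (le_of_eq hcard_mcup)
    intro i c hne
    by_contra hmem
    apply hne
    apply patM_entry_zero
    intro l hl
    unfold charVec
    rw [if_neg]
    intro hlU
    exact hmem (Finset.mem_image.mpr ⟨l, hlU, by rw [hl, posRow_bipMk]⟩)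
  -- M generic lower
  have hMgenlow : (mcup pos 𝒜 ℬ).card ≤ genRankM F pos := by
    unfold genRankM
    have h3 := isUnit_generic_patM_submatrix pos F hpos (𝒜 ∪ ℬ) (mcup pos 𝒜 ℬ) hmcU huniqM
    have h4 := card_le_rank_of_unit_submatrix _ _ _ h3
    rwa [Fintype.card_coe] at h4
  -- M generic upper
  have hMgenhigh : genRankM F pos ≤ (mcup pos 𝒜 ℬ).card := by
    unfold genRankM
    obtain ⟨f, g, hfinj, hginj, hunit⟩ := exists_unit_submatrix (patM pos (genericX F n))
    have hdetK : ((patM pos (genericX F n)).submatrix f g).det ≠ 0 := by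
      rw [Matrix.isUnit_iff_isUnit_det, isUnit_iff_ne_zero] at hunit
      exact hunit
    have heq : (patM pos (genericX F n)).submatrix f g
        = (((patM pos (fun l => (MvPolynomial.X l : MvPolynomial (Fin n) F))).submatrix f g).map
          (algebraMap (MvPolynomial (Fin n) F) (FractionRing (MvPolynomial (Fin n) F)))) := by
      have hgen : patM pos (genericX F n)
          = (patM pos (fun l => (MvPolynomial.X l : MvPolynomial (Fin n) F))).map
            (algebraMap (MvPolynomial (Fin n) F) (FractionRing (MvPolynomial (Fin n) F))) := by
        rw [patM_map]
        rfl
      ext i c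
      have h6 := congrFun (congrFun hgen (f i)) (g c)
      simpa using h6
    have hdetP : (((patM pos (fun l => (MvPolynomial.X l : MvPolynomial (Fin n) F))).submatrix
        f g)).det ≠ 0 := by
      intro h0
      apply hdetK
      rw [heq, ← RingHom.mapMatrix_apply, ← RingHom.map_det, h0, map_zero]
    obtain ⟨ℓ, σ, hℓ⟩ := exists_labels_of_det_ne_zero pos F f g hdetP
    have hℓinj : Function.Injective ℓ := by
      intro i i' h
      have h2 := congrArg pos h
      rw [hℓ i, hℓ i'] at h2
      have hcol := congrArg posCol h2
      rw [posCol_bipMk, posCol_bipMk] at hcol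
      exact hginj hcol
    have hCcard : (Finset.image ℓ Finset.univ).card = (patM pos (genericX F n)).rank := by
      rw [Finset.card_image_of_injective _ hℓinj, Finset.card_univ, Fintype.card_fin]
    have hCR : Set.InjOn (fun l => posRow (pos l)) ↑(Finset.image ℓ Finset.univ) := by
      intro x hx y hy hxy
      obtain ⟨i, -, rfl⟩ := Finset.mem_image.mp (Finset.mem_coe.mp hx)
      obtain ⟨i', -, rfl⟩ := Finset.mem_image.mp (Finset.mem_coe.mp hy)
      have : posRow (pos (ℓ i)) = posRow (pos (ℓ i')) := hxy
      rw [hℓ i, hℓ i', posRow_bipMk, posRow_bipMk] at this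
      exact congrArg ℓ (σ.injective (hfinj this))
    have hCC : Set.InjOn (fun l => posCol (pos l)) ↑(Finset.image ℓ Finset.univ) := by
      intro x hx y hy hxy
      obtain ⟨i, -, rfl⟩ := Finset.mem_image.mp (Finset.mem_coe.mp hx)
      obtain ⟨i', -, rfl⟩ := Finset.mem_image.mp (Finset.mem_coe.mp hy)
      have : posCol (pos (ℓ i)) = posCol (pos (ℓ i')) := hxy
      rw [hℓ i, hℓ i', posCol_bipMk, posCol_bipMk] at this
      exact congrArg ℓ (hginj this)
    have h5 := hcore _ hCR hCC
    omega
  exact ⟨⟨le_antisymm hAup hAlow, le_antisymm hAgenlow hAgenhigh⟩,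
    ⟨le_antisymm hBup hBlow, le_antisymm hBgenlow hBgenhigh⟩,
    ⟨le_antisymm hMup hMlow, le_antisymm hMgenlow hMgenhigh⟩⟩
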